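/- Let v₀ be a centre vertex of a connected graph G with radius r ≥ 2, and suppose for some i with 2 ≤ i ≤ r-1 the sphere N_i(v₀) consists of a single vertex v_i. Let v₁ be a neighbour of v₀ lying on a shortest path from v₀ to v_i. Then ecc(v₁) ≤ r - 1. -/

import Mathlib

/-- The set of vertices at distance exactly `i` from `u`. -/
noncomputable def SimpleGraph.nsphere {V : Type*} [Fintype V] (G : SimpleGraph V) (u : V) (i : ℕ) : Finset V :=
  Finset.univ.filter (fun w => G.dist u w = i)

/-- The eccentricity of a vertex: the maximum distance from it to any vertex. -/
noncomputable def SimpleGraph.eccentN {V : Type*} [Fintype V] (G : SimpleGraph V) (u : V) : ℕ :=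
  Finset.univ.sup (fun w => G.dist u w)

private lemma dist_getVert_le {V : Type*} {G : SimpleGraph V} (hG : G.Connected) :
    ∀ {u w : V} (p : G.Walk u w) (k : ℕ), G.dist u (p.getVert k) ≤ k := by
  intro u w p
  induction p with
  | nil => intro k; simp [SimpleGraph.Walk.getVert, SimpleGraph.dist_self]
  | @cons a b c h q ih =>
    intro k
    cases k with
    | zero => simp [SimpleGraph.Walk.getVert, SimpleGraph.dist_self]
    | succ k =>
      have h1 : G.dist a b = 1 := SimpleGraph.dist_eq_one_iff_adj.2 h
      have h2 := ih k
      have ht : G.dist a (q.getVert k) ≤ G.dist a b + G.dist b (q.getVert k) :=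
        hG.dist_triangle
      simpa [SimpleGraph.Walk.getVert] using le_trans ht (by omega)

private lemma getVert_dist_le {V : Type*} {G : SimpleGraph V} :
    ∀ {u w : V} (p : G.Walk u w) (k : ℕ), G.dist (p.getVert k) w ≤ p.length - k := by
  intro u w p
  induction p with
  | nil => intro k; simp [SimpleGraph.Walk.getVert_of_length_le]
  | @cons a b c h q ih =>
    intro k
    cases k with
    | zero =>
      simpa [SimpleGraph.Walk.getVert] using
        SimpleGraph.dist_le (SimpleGraph.Walk.cons h q)
    | succ k =>
      have := ih k
      simpa [SimpleGraph.Walk.getVert] using this.trans (by omega)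

/-- If `v₀` is a centre vertex of a connected graph of radius `r ≥ 2`, the sphere
`N_i(v₀)` (with `2 ≤ i ≤ r - 1`) consists of a single vertex `vᵢ`, and `v₁` is a
neighbour of `v₀` on a shortest `v₀–vᵢ` path, then `ecc(v₁) ≤ r - 1`. -/
theorem eccent_le_of_cut_sphere {V : Type*} [Fintype V] [DecidableEq V]
    (G : SimpleGraph V) (hG : G.Connected)
    (v₀ : V) (hctr : ∀ v, G.eccentN v₀ ≤ G.eccentN v)
    (r : ℕ) (hr : r = G.eccentN v₀) (hr2 : 2 ≤ r)
    (i : ℕ) (hi2 : 2 ≤ i) (hir : i ≤ r - 1)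
    (vi : V) (hsphere : G.nsphere v₀ i = {vi})
    (v₁ : V) (hadj : G.Adj v₀ v₁) (hshort : G.dist v₁ vi = i - 1) :
    G.eccentN v₁ ≤ r - 1 := by
  apply Finset.sup_le
  intro w _
  have hdle : G.dist v₀ w ≤ r := by
    rw [hr]; exact Finset.le_sup (f := fun w => G.dist v₀ w) (Finset.mem_univ w)
  have h01 : G.dist v₁ v₀ = 1 := SimpleGraph.dist_eq_one_iff_adj.2 hadj.symm
  set d := G.dist v₀ w with hd
  by_cases hcase : d ≤ i - 1
  · calc G.dist v₁ w ≤ G.dist v₁ v₀ + G.dist v₀ w := hG.dist_triangle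
      _ ≤ 1 + (i - 1) := by omega
      _ ≤ r - 1 := by omega
  · -- d ≥ i
    have hid : i ≤ d := by omega
    obtain ⟨p, hp⟩ := (hG.preconnected v₀ w).exists_walk_length_eq_dist
    set x := p.getVert i with hx
    have h1 : G.dist v₀ x ≤ i := dist_getVert_le hG p i
    have h2 : G.dist x w ≤ d - i := by
      have := getVert_dist_le p i
      rwa [hp] at this
    have htri : d ≤ G.dist v₀ x + G.dist x w := hG.dist_triangle
    have hx1 : G.dist v₀ x = i := by omega
    have hx2 : G.dist x w = d - i := by omega
    have hxvi : x = vi := by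
      have : x ∈ G.nsphere v₀ i := by
        simp [SimpleGraph.nsphere, hx1]
      rw [hsphere, Finset.mem_singleton] at this
      exact this
    calc G.dist v₁ w ≤ G.dist v₁ vi + G.dist vi w := hG.dist_triangle
      _ = (i - 1) + (d - i) := by rw [hshort, ← hxvi, hx2]
      _ ≤ r - 1 := by omega
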